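/- Let X be a real n×k matrix of rank k, J = diag(1_p, −1_q) with p + q = k, and ρ > 0. Let P = ρ X J X^T have skinny spectral decomposition P = U Λ U^T, where U ∈ ℝ^{n×k} has orthonormal columns (U^T U = I_k) and Λ ∈ ℝ^{k×k} is an invertible diagonal matrix of the nonzero eigenvalues of P. If W_X is any k×k orthogonal matrix satisfying U Λ^{-1} W_X = ρ^{-1} X (X^T X)^{-1} J (X^T X)^{-1/2}, then U W_X = X (X^T X)^{-1/2}. -/
import Mathlib


open Matrix

/-- Let `X` be a real `n × k` matrix of rank `k`, `J = diag(1_p, −1_q)` with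
`p + q = k`, and `ρ > 0`.  Let `P = ρ X J Xᵀ` have a skinny spectral decomposition
`P = U Λ Uᵀ` with `Uᵀ U = I_k` and `Λ` invertible diagonal.  Let `S` be the unique
positive definite square root of `Xᵀ X` (so `(XᵀX)^{-1/2} = S⁻¹`).  If `W_X` is any `k × k`
orthogonal matrix satisfying `U Λ⁻¹ W_X = ρ⁻¹ X (XᵀX)⁻¹ J S⁻¹`, then
`U W_X = X S⁻¹`. -/
theorem top_eigvec_orient_eq_whitened
    (n k p q : ℕ) (hpq : p + q = k)
    (X : Matrix (Fin n) (Fin k) ℝ) (hX : X.rank = k)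
    (ρ : ℝ) (hρ : 0 < ρ)
    (S : Matrix (Fin k) (Fin k) ℝ) (hS : S.PosDef) (hSsq : S * S = Xᵀ * X)
    (U : Matrix (Fin n) (Fin k) ℝ) (dΛ : Fin k → ℝ)
    (hU : Uᵀ * U = 1) (hΛinv : ∀ i, dΛ i ≠ 0)
    (hP : ρ • (X * Matrix.diagonal (fun i : Fin k => if (i : ℕ) < p then (1 : ℝ) else -1) * Xᵀ)
        = U * Matrix.diagonal dΛ * Uᵀ)
    (WX : Matrix (Fin k) (Fin k) ℝ)
    (hWXorth : WX * WXᵀ = 1 ∧ WXᵀ * WX = 1)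
    (hWX : U * (Matrix.diagonal dΛ)⁻¹ * WX
        = ρ⁻¹ • (X * (Xᵀ * X)⁻¹
            * Matrix.diagonal (fun i : Fin k => if (i : ℕ) < p then (1 : ℝ) else -1) * S⁻¹)) :
    U * WX = X * S⁻¹ := by
  set J : Matrix (Fin k) (Fin k) ℝ :=
    Matrix.diagonal (fun i : Fin k => if (i : ℕ) < p then (1 : ℝ) else -1) with hJdef
  have hJJ : J * J = 1 := by
    rw [hJdef, Matrix.diagonal_mul_diagonal]
    have h1 : (fun i : Fin k => (if (i : ℕ) < p then (1 : ℝ) else -1)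
        * (if (i : ℕ) < p then (1 : ℝ) else -1)) = fun _ => (1 : ℝ) := by
      funext i; split <;> norm_num
    rw [h1, Matrix.diagonal_one]
  have hΛ : Matrix.diagonal dΛ * (Matrix.diagonal dΛ)⁻¹ = 1 := by
    apply Matrix.mul_nonsing_inv
    rw [Matrix.det_diagonal]
    exact (Finset.prod_ne_zero_iff.2 fun i _ => hΛinv i).isUnit
  have hXtX : (Xᵀ * X) * (Xᵀ * X)⁻¹ = 1 := by
    apply Matrix.mul_nonsing_inv
    rw [← hSsq, Matrix.det_mul]
    exact (mul_pos hS.det_pos hS.det_pos).ne'.isUnit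
  have key : (U * Matrix.diagonal dΛ * Uᵀ) * (U * (Matrix.diagonal dΛ)⁻¹ * WX) = U * WX := by
    simp only [Matrix.mul_assoc]
    rw [← Matrix.mul_assoc Uᵀ U, hU, Matrix.one_mul,
      ← Matrix.mul_assoc (Matrix.diagonal dΛ), hΛ, Matrix.one_mul]
  rw [← key, ← hP, hWX, Matrix.smul_mul, Matrix.mul_smul, smul_smul,
    mul_inv_cancel₀ hρ.ne', one_smul]
  simp only [Matrix.mul_assoc]
  rw [← Matrix.mul_assoc Xᵀ X, ← Matrix.mul_assoc (Xᵀ * X), hXtX, Matrix.one_mul,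
    ← Matrix.mul_assoc J J, hJJ, Matrix.one_mul]
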